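/- Let r be a positive integer and let Φ_r(m) denote the number of subsets S of {1, 2, …, m} of cardinality r such that gcd(S) is relatively prime to m. Then for every positive integer n, ∑_{k=1}^{n} C(k, r)·ω(n−k) = ∑_{m=1}^{n} Φ_r(m) · ( ∑_{j=0}^{⌊(n−m)/m⌋} ω((n−m) − j·m) ), where C(a, b) denotes the binomial coefficient. -/

import Mathlib

open scoped Classical

/-- The pentagonal-number coefficient function `ω`: `ω 0 = 1`,
`ω m = (-1)^k` if `m = (3k² + k)/2` or `m = (3k² - k)/2` for a positive integer `k`,
and `ω m = 0` otherwise (in particular for negative `m`). -/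
noncomputable def pentaCoeff (m : ℤ) : ℤ :=
  if m = 0 then 1
  else if h : ∃ k : ℕ, 0 < k ∧ (2 * m = 3 * (k : ℤ) ^ 2 + k ∨ 2 * m = 3 * (k : ℤ) ^ 2 - k)
  then (-1) ^ h.choose
  else 0

/-- The inner sum `∑_{j=0}^{⌊(n-m)/m⌋} ω((n-m) - j·m)`. -/
noncomputable def pentaSum (n m : ℕ) : ℤ :=
  ∑ j ∈ Finset.range ((n - m) / m + 1), pentaCoeff (((n : ℤ) - m) - j * m)

/-- `PhiCard m r` is the number of subsets `S` of `{1, 2, …, m}` of cardinality `r`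
such that `gcd S` is relatively prime to `m`. -/
noncomputable def PhiCard (m r : ℕ) : ℕ :=
  ((Finset.Icc 1 m).powerset.filter
    fun S => S.card = r ∧ Nat.Coprime (S.gcd id) m).card

lemma phi_fiber (k m r : ℕ) (hk : 0 < k) (hm : m ∣ k) :
    ((Finset.powersetCard r (Finset.Icc 1 k)).filter
      (fun S => k / Nat.gcd (S.gcd id) k = m)).card = PhiCard m r := by
  have hm0 : 0 < m := Nat.pos_of_dvd_of_pos hm hk
  set g : ℕ := k / m with hg
  have hgm : g * m = k := Nat.div_mul_cancel hm
  have hg0 : 0 < g := Nat.div_pos (Nat.le_of_dvd hk hm) hm0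
  have hkg : k / g = m := by rw [hg, Nat.div_div_self hm hk.ne']
  rw [PhiCard]
  refine Finset.card_nbij' (fun S => S.image (· / g)) (fun S' => S'.image (g * ·)) ?_ ?_ ?_ ?_
  · -- i maps into target
    intro S hS
    simp only [Finset.mem_coe, Finset.mem_filter, Finset.mem_powersetCard] at hS
    obtain ⟨⟨hsub, hcard⟩, hfib⟩ := hS
    have hGdvd : Nat.gcd (S.gcd id) k ∣ k := Nat.gcd_dvd_right _ _
    have hGg : Nat.gcd (S.gcd id) k = g := by
      rw [hg, ← hfib, Nat.div_div_self hGdvd hk.ne']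
    have hgdvd : ∀ s ∈ S, g ∣ s := by
      intro s hs
      have h1 : (S.gcd id) ∣ s := Finset.gcd_dvd hs
      exact (hGg ▸ Nat.gcd_dvd_left (S.gcd id) k).trans h1
    simp only [Finset.mem_coe, Finset.mem_filter, Finset.mem_powerset]
    refine ⟨?_, ?_, ?_⟩
    · intro x hx
      simp only [Finset.mem_image] at hx
      obtain ⟨s, hs, rfl⟩ := hx
      have hs' := hsub hs
      simp only [Finset.mem_Icc] at hs' ⊢
      have hgs : g ∣ s := hgdvd s hs
      constructor
      · exact (Nat.one_le_div_iff hg0).2 (Nat.le_of_dvd (by omega) hgs)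
      · calc s / g ≤ k / g := Nat.div_le_div_right hs'.2
          _ = m := hkg
    · rw [Finset.card_image_of_injOn, hcard]
      intro a ha b hb hab
      have h1 : a / g * g = a := Nat.div_mul_cancel (hgdvd a ha)
      have h2 : b / g * g = b := Nat.div_mul_cancel (hgdvd b hb)
      simp only at hab
      rw [← h1, ← h2, hab]
    · -- coprimality
      have h1 : (S.image (· / g)).gcd id = S.gcd (· / g) := by
        rw [Finset.gcd_image]; rfl
      have h2 : S.gcd (fun x => g * (x / g)) = g * S.gcd (· / g) := by
        rw [Finset.gcd_mul_left]; simp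
      have h3 : S.gcd (fun x => g * (x / g)) = S.gcd id := by
        apply Finset.gcd_congr rfl
        intro s hs
        exact Nat.mul_div_cancel' (hgdvd s hs)
      have hGg : Nat.gcd (S.gcd id) k = g := by
        rw [hg, ← hfib, Nat.div_div_self (Nat.gcd_dvd_right _ _) hk.ne']
      have h4 : g * Nat.gcd (S.gcd (· / g)) m = g := by
        calc g * Nat.gcd (S.gcd (· / g)) m
            = Nat.gcd (g * S.gcd (· / g)) (g * m) := (Nat.gcd_mul_left _ _ _).symm
          _ = Nat.gcd (S.gcd id) k := by rw [← h2, h3, hgm]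
          _ = g := hGg
      have : Nat.gcd (S.gcd (· / g)) m = 1 := by
        have := Nat.eq_of_mul_eq_mul_left hg0 (h4.trans (mul_one g).symm)
        exact this
      rw [h1]
      exact this
  · -- j maps into source
    intro S' hS'
    simp only [Finset.mem_coe, Finset.mem_filter, Finset.mem_powerset] at hS'
    obtain ⟨hsub, hcard, hcop⟩ := hS'
    simp only [Finset.mem_coe, Finset.mem_filter, Finset.mem_powersetCard]
    have hgcd : (S'.image (g * ·)).gcd id = g * S'.gcd id := by
      rw [Finset.gcd_image]
      have : (id ∘ (g * ·) : ℕ → ℕ) = fun x => g * (id x) := rfl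
      rw [this, Finset.gcd_mul_left]
      simp
    refine ⟨⟨?_, ?_⟩, ?_⟩
    · intro x hx
      simp only [Finset.mem_image] at hx
      obtain ⟨s, hs, rfl⟩ := hx
      have hs' := hsub hs
      simp only [Finset.mem_Icc] at hs' ⊢
      constructor
      · exact Nat.one_le_iff_ne_zero.2 (Nat.mul_ne_zero hg0.ne' (by omega))
      · calc g * s ≤ g * m := Nat.mul_le_mul_left g hs'.2
          _ = k := hgm
    · rw [Finset.card_image_of_injective _ (mul_right_injective₀ hg0.ne'), hcard]
    · rw [hgcd]
      have : Nat.gcd (g * S'.gcd id) k = g := by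
        calc Nat.gcd (g * S'.gcd id) k = Nat.gcd (g * S'.gcd id) (g * m) := by rw [hgm]
          _ = g * Nat.gcd (S'.gcd id) m := Nat.gcd_mul_left _ _ _
          _ = g * 1 := by rw [hcop]
          _ = g := mul_one g
      rw [this, hkg]
  · -- left inverse
    intro S hS
    simp only [Finset.mem_coe, Finset.mem_filter, Finset.mem_powersetCard] at hS
    obtain ⟨⟨hsub, hcard⟩, hfib⟩ := hS
    have hGg : Nat.gcd (S.gcd id) k = g := by
      rw [hg, ← hfib, Nat.div_div_self (Nat.gcd_dvd_right _ _) hk.ne']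
    have hgdvd : ∀ s ∈ S, g ∣ s := by
      intro s hs
      have h1 : (S.gcd id) ∣ s := Finset.gcd_dvd hs
      exact (hGg ▸ Nat.gcd_dvd_left (S.gcd id) k).trans h1
    simp only [Finset.image_image]
    have : S.image ((g * ·) ∘ (· / g)) = S.image id := by
      apply Finset.image_congr
      intro s hs
      exact Nat.mul_div_cancel' (hgdvd s hs)
    rw [this, Finset.image_id]
  · -- right inverse
    intro S' hS'
    simp only [Finset.image_image]
    have : S'.image ((· / g) ∘ (g * ·)) = S'.image id := by
      apply Finset.image_congr
      intro s _
      simp only [Function.comp_apply, id]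
      exact Nat.mul_div_cancel_left s hg0
    rw [this, Finset.image_id]

lemma sum_divisors_phi (r k : ℕ) (hk : 0 < k) :
    ∑ m ∈ k.divisors, PhiCard m r = k.choose r := by
  have h := Finset.card_eq_sum_card_fiberwise
    (f := fun S : Finset ℕ => k / Nat.gcd (S.gcd id) k)
    (s := Finset.powersetCard r (Finset.Icc 1 k)) (t := k.divisors) ?_
  · rw [Finset.card_powersetCard, Nat.card_Icc] at h
    simp only [Nat.add_sub_cancel] at h
    rw [h]
    symm
    apply Finset.sum_congr rfl
    intro m hm
    rw [phi_fiber k m r hk (Nat.dvd_of_mem_divisors hm)]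
  · intro S _
    rw [Finset.mem_coe, Nat.mem_divisors]
    exact ⟨Nat.div_dvd_of_dvd (Nat.gcd_dvd_right _ _), hk.ne'⟩

lemma pentaSum_eq (n m : ℕ) (hm0 : 0 < m) (hmn : m ≤ n) :
    pentaSum n m = ∑ k ∈ (Finset.Icc 1 n).filter (fun k => m ∣ k),
      pentaCoeff ((n : ℤ) - k) := by
  have hrange : (n - m) / m + 1 = n / m := by
    rw [← Nat.add_div_right _ hm0, Nat.sub_add_cancel hmn]
  rw [pentaSum, hrange]
  refine Finset.sum_nbij' (fun j => (j + 1) * m) (fun k => k / m - 1) ?_ ?_ ?_ ?_ ?_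
  · intro j hj
    simp only [Finset.mem_range] at hj
    simp only [Finset.mem_filter, Finset.mem_Icc]
    refine ⟨⟨Nat.one_le_iff_ne_zero.2 (Nat.mul_ne_zero (by omega) hm0.ne'), ?_⟩,
      Dvd.intro_left _ rfl⟩
    rw [← Nat.le_div_iff_mul_le hm0]
    omega
  · intro k hk
    simp only [Finset.mem_filter, Finset.mem_Icc] at hk
    obtain ⟨⟨hk1, hkn⟩, hdvd⟩ := hk
    simp only [Finset.mem_range]
    have h1 : 1 ≤ k / m := (Nat.one_le_div_iff hm0).2 (Nat.le_of_dvd (by omega) hdvd)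
    have h2 : k / m ≤ n / m := Nat.div_le_div_right hkn
    have h3 : 0 < n / m := (Nat.one_le_div_iff hm0).2 hmn
    omega
  · intro j _
    show (j + 1) * m / m - 1 = j
    rw [Nat.mul_div_cancel _ hm0]
    omega
  · intro k hk
    simp only [Finset.mem_filter, Finset.mem_Icc] at hk
    obtain ⟨⟨hk1, hkn⟩, hdvd⟩ := hk
    have h1 : 1 ≤ k / m := (Nat.one_le_div_iff hm0).2 (Nat.le_of_dvd (by omega) hdvd)
    have : k / m - 1 + 1 = k / m := by omega
    show (k / m - 1 + 1) * m = k
    rw [this, Nat.div_mul_cancel hdvd]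
  · intro j _
    congr 1
    push_cast
    ring

theorem euler_type_PhiCard (r : ℕ) (hr : 0 < r) (n : ℕ) (hn : 0 < n) :
    ∑ k ∈ Finset.Icc 1 n, (k.choose r : ℤ) * pentaCoeff ((n : ℤ) - k) =
      ∑ m ∈ Finset.Icc 1 n, (PhiCard m r : ℤ) * pentaSum n m := by
  symm
  calc ∑ m ∈ Finset.Icc 1 n, (PhiCard m r : ℤ) * pentaSum n m
      = ∑ m ∈ Finset.Icc 1 n, ∑ k ∈ (Finset.Icc 1 n).filter (fun k => m ∣ k),
          (PhiCard m r : ℤ) * pentaCoeff ((n : ℤ) - k) := by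
        apply Finset.sum_congr rfl
        intro m hm
        simp only [Finset.mem_Icc] at hm
        rw [pentaSum_eq n m hm.1 hm.2, Finset.mul_sum]
    _ = ∑ m ∈ Finset.Icc 1 n, ∑ k ∈ Finset.Icc 1 n,
          if m ∣ k then (PhiCard m r : ℤ) * pentaCoeff ((n : ℤ) - k) else 0 := by
        apply Finset.sum_congr rfl
        intro m _
        rw [Finset.sum_filter]
    _ = ∑ k ∈ Finset.Icc 1 n, ∑ m ∈ Finset.Icc 1 n,
          if m ∣ k then (PhiCard m r : ℤ) * pentaCoeff ((n : ℤ) - k) else 0 :=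
        Finset.sum_comm
    _ = ∑ k ∈ Finset.Icc 1 n, ∑ m ∈ (Finset.Icc 1 n).filter (fun m => m ∣ k),
          (PhiCard m r : ℤ) * pentaCoeff ((n : ℤ) - k) := by
        apply Finset.sum_congr rfl
        intro k _
        rw [Finset.sum_filter]
    _ = ∑ k ∈ Finset.Icc 1 n, (k.choose r : ℤ) * pentaCoeff ((n : ℤ) - k) := by
        apply Finset.sum_congr rfl
        intro k hk
        simp only [Finset.mem_Icc] at hk
        have hfil : (Finset.Icc 1 n).filter (fun m => m ∣ k) = k.divisors := by
          ext m
          simp only [Finset.mem_filter, Finset.mem_Icc, Nat.mem_divisors]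
          constructor
          · rintro ⟨⟨_, _⟩, h3⟩
            exact ⟨h3, by omega⟩
          · rintro ⟨h1, _⟩
            have h4 := Nat.le_of_dvd (by omega) h1
            have h5 := Nat.pos_of_dvd_of_pos h1 (by omega)
            exact ⟨⟨by omega, by omega⟩, h1⟩
        rw [hfil, ← Finset.sum_mul]
        congr 1
        rw [← Nat.cast_sum, sum_divisors_phi r k (by omega)]
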